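/- Let R be a reduced irreducible non-simply-laced root system with highest root θ and squared-length ratio Λ. If α is a short root with (α,θ∨) ≠ 0 such that Λα − θ is a positive root, then ht_l(α) = (ht_l(θ) + 1)/Λ. -/
import Mathlib


open scoped RealInnerProductSpace Classical

noncomputable section

variable {E : Type*} [NormedAddCommGroup E] [InnerProductSpace ℝ E]

/-- A reduced irreducible root system in a Euclidean space. -/
structure RRS (E : Type*) [NormedAddCommGroup E] [InnerProductSpace ℝ E] : Type _ where
  roots : Finset E
  nonempty : roots.Nonempty
  span_eq : Submodule.span ℝ (roots : Set E) = ⊤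
  ne_zero : ∀ α ∈ roots, α ≠ 0
  reflect_mem : ∀ α ∈ roots, ∀ β ∈ roots, β - (2 * ⟪β, α⟫ / ⟪α, α⟫) • α ∈ roots
  pairing_int : ∀ α ∈ roots, ∀ β ∈ roots, ∃ n : ℤ, 2 * ⟪β, α⟫ / ⟪α, α⟫ = (n : ℝ)
  reduced : ∀ α ∈ roots, ∀ c : ℝ, c • α ∈ roots → c = 1 ∨ c = -1
  irreducible : ∀ s : Finset E, s ⊆ roots → s.Nonempty →
      (∀ α ∈ s, ∀ β ∈ roots, β ∉ s → ⟪α, β⟫ = 0) → s = roots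

/-- The Cartan pairing `⟨β, α∨⟩ = 2(β,α)/(α,α)`. -/
def pairR (β α : E) : ℝ := 2 * ⟪β, α⟫ / ⟪α, α⟫

/-- The orthogonal reflection in (the hyperplane orthogonal to) `α`. -/
def reflMap (α x : E) : E := x - pairR x α • α

/-- `Δ` is a base of simple roots, with `coeff α γ` the coordinates of roots. -/
def IsBase (R : RRS E) (Δ : Finset E) (coeff : E → E → ℤ) : Prop :=
  Δ ⊆ R.roots ∧ LinearIndependent ℝ (fun γ : (Δ : Set E) => (γ : E)) ∧
    (∀ α ∈ R.roots, α = ∑ γ ∈ Δ, (coeff α γ : ℝ) • γ) ∧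
    (∀ α ∈ R.roots, (∀ γ ∈ Δ, 0 ≤ coeff α γ) ∨ (∀ γ ∈ Δ, coeff α γ ≤ 0))

/-- Positivity (all simple-root coordinates nonnegative). -/
def IsPos (Δ : Finset E) (coeff : E → E → ℤ) (α : E) : Prop := ∀ γ ∈ Δ, 0 ≤ coeff α γ

/-- Height: the sum of the simple-root coordinates. -/
def htZ (Δ : Finset E) (coeff : E → E → ℤ) (α : E) : ℤ := ∑ γ ∈ Δ, coeff α γ

/-- Partial height: the sum of coordinates over simple roots satisfying `P`. -/
def htP (Δ : Finset E) (coeff : E → E → ℤ) (P : E → Prop) (α : E) : ℤ :=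
  ∑ γ ∈ Δ.filter P, coeff α γ

/-- The result of applying the word of reflections `s_{γ_p} ⋯ s_{γ_1}` to `x`,
where `l = [γ_1, …, γ_p]`. -/
def wordMap (l : List E) (x : E) : E := l.foldl (fun y γ => reflMap γ y) x

/-- The chain of roots `α^(i) = s_{γ_1} ⋯ s_{γ_{i-1}} γ_i` (0-based `i`). -/
def chainRoot (l : List E) (i : ℕ) : E := wordMap ((l.take i).reverse) (l.getD i 0)


section Aux

lemma inner_self_ne (γ : E) (hγ : γ ≠ 0) : ⟪γ, γ⟫ ≠ 0 := fun h => hγ ((inner_self_eq_zero (𝕜 := ℝ)).mp h)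

lemma reflMap_inner (γ : E) (hγ : γ ≠ 0) (x y : E) :
    ⟪reflMap γ x, reflMap γ y⟫ = ⟪x, y⟫ := by
  have hg := inner_self_ne γ hγ
  simp only [reflMap, pairR, inner_sub_left, inner_sub_right, real_inner_smul_left,
    real_inner_smul_right]
  rw [real_inner_comm γ x, real_inner_comm γ y] at *
  field_simp
  ring

lemma reflMap_reflMap (γ : E) (hγ : γ ≠ 0) (x : E) :
    reflMap γ (reflMap γ x) = x := by
  have hg := inner_self_ne γ hγ
  simp only [reflMap, pairR, inner_sub_left, real_inner_smul_left]
  have : (2 * (⟪x, γ⟫ - 2 * ⟪x, γ⟫ / ⟪γ, γ⟫ * ⟪γ, γ⟫) / ⟪γ, γ⟫) = -(2*⟪x, γ⟫/⟪γ, γ⟫) := by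
    field_simp; ring
  rw [this]; module

lemma inner_reflMap_right (γ : E) (hγ : γ ≠ 0) (x : E) :
    ⟪γ, reflMap γ x⟫ = -⟪γ, x⟫ := by
  have hg := inner_self_ne γ hγ
  simp only [reflMap, pairR, inner_sub_right, real_inner_smul_right]
  rw [real_inner_comm γ x] at *
  field_simp
  ring

lemma pair_small (L : ℝ) (r s : E) (hr : ⟪r, r⟫ = L) (hs : ⟪s, s⟫ = L)
    (h1 : s ≠ r) (h2 : s ≠ -r) (n : ℤ) (hn : 2 * ⟪s, r⟫ / ⟪r, r⟫ = (n : ℝ)) :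
    n = -1 ∨ n = 0 ∨ n = 1 := by
  by_cases hL0 : L = 0
  · exfalso
    have hs0 : s = 0 := (inner_self_eq_zero (𝕜 := ℝ)).mp (hs.trans hL0)
    have hr0 : r = 0 := (inner_self_eq_zero (𝕜 := ℝ)).mp (hr.trans hL0)
    exact h1 (by rw [hs0, hr0])
  have hsr : ⟪s, r⟫ = (n : ℝ) * L / 2 := by
    rw [hr] at hn; field_simp at hn ⊢; linarith
  have hq : ⟪s - ((n : ℝ)/2) • r, s - ((n : ℝ)/2) • r⟫ = L * (1 - (n : ℝ)^2/4) := by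
    simp only [inner_sub_left, inner_sub_right, real_inner_smul_left, real_inner_smul_right,
      hr, hs, hsr, real_inner_comm r s]
    rw [real_inner_comm r s] at hsr
    rw [hsr]
    ring
  have hq0 : (0:ℝ) ≤ L * (1 - (n : ℝ)^2/4) := hq ▸ real_inner_self_nonneg
  have hL : 0 < L := by
    rcases lt_or_ge 0 L with h | h
    · exact h
    · exfalso
      have : ‖s‖^2 = L := by rw [← hs]; rw [real_inner_self_eq_norm_sq]
      have hs0 : s = 0 := by
        have : ‖s‖^2 ≤ 0 := this ▸ h
        have : ‖s‖ = 0 := by nlinarith [norm_nonneg s]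
        exact norm_eq_zero.mp this
      exact hL0 (by rw [← hs, hs0]; simp)
  have hn4 : (n : ℝ)^2 ≤ 4 := by nlinarith
  by_cases hcase : (n : ℝ)^2 = 4
  · exfalso
    have hz : ⟪s - ((n : ℝ)/2) • r, s - ((n : ℝ)/2) • r⟫ = 0 := by rw [hq, hcase]; ring
    have hz2 : s = ((n : ℝ)/2) • r := sub_eq_zero.mp ((inner_self_eq_zero (𝕜 := ℝ)).mp hz)
    have h4 : n^2 = 4 := by exact_mod_cast hcase
    have hm : (n - 2) * (n + 2) = 0 := by linear_combination h4
    rcases mul_eq_zero.mp hm with hc | hc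
    · have : n = 2 := by omega
      subst this
      exact h1 (by rw [hz2]; norm_num)
    · have : n = -2 := by omega
      subst this
      refine h2 ?_
      rw [hz2]
      push_cast
      norm_num
  · have hlt : (n : ℝ)^2 < 4 := lt_of_le_of_ne hn4 hcase
    have hltZ : n^2 < 4 := by exact_mod_cast (by push_cast; exact hlt : ((n^2 : ℤ) : ℝ) < 4)
    have : -1 ≤ n ∧ n ≤ 1 := by constructor <;> nlinarith
    omega

variable (R : RRS E) (Δ : Finset E) (coeff : E → E → ℤ)

lemma coeff_unique' (hLI : LinearIndependent ℝ (fun γ : (Δ : Set E) => (γ : E)))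
    (c : E → ℝ) (h : ∑ γ ∈ Δ, c γ • γ = 0) : ∀ γ ∈ Δ, c γ = 0 := by
  intro γ hγ
  rw [linearIndependent_iff'] at hLI
  exact hLI Finset.univ (fun i => c i)
    (by rw [← h, ← Finset.sum_finset_coe (fun γ => c γ • γ) Δ]) ⟨γ, by simpa using hγ⟩
    (Finset.mem_univ _)

lemma coeff_combo (hB : IsBase R Δ coeff) {u v w : E}
    (hu : u ∈ R.roots) (hv : v ∈ R.roots) (hw : w ∈ R.roots) (c d : ℝ)
    (h : w = c • u + d • v) :
    ∀ γ ∈ Δ, (coeff w γ : ℝ) = c * coeff u γ + d * coeff v γ := by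
  have hrep := hB.2.2.1
  have key : ∑ γ ∈ Δ, ((coeff w γ : ℝ) - (c * coeff u γ + d * coeff v γ)) • γ = 0 := by
    have e1 := hrep w hw
    have e2 := hrep u hu
    have e3 := hrep v hv
    calc ∑ γ ∈ Δ, ((coeff w γ : ℝ) - (c * coeff u γ + d * coeff v γ)) • γ
        = (∑ γ ∈ Δ, (coeff w γ : ℝ) • γ)
            - (c • ∑ γ ∈ Δ, (coeff u γ : ℝ) • γ + d • ∑ γ ∈ Δ, (coeff v γ : ℝ) • γ) := by
          rw [Finset.smul_sum, Finset.smul_sum, ← Finset.sum_add_distrib,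
            ← Finset.sum_sub_distrib]
          refine Finset.sum_congr rfl fun γ _ => ?_
          rw [smul_smul, smul_smul, sub_smul, add_smul]
      _ = w - (c • u + d • v) := by rw [← e1, ← e2, ← e3]
      _ = 0 := by rw [← h, sub_self]
  intro γ hγ
  have := coeff_unique' Δ hB.2.1 _ key γ hγ
  linarith

lemma coeff_simple (hB : IsBase R Δ coeff) {γ0 : E} (hγ0 : γ0 ∈ Δ) :
    ∀ γ ∈ Δ, (coeff γ0 γ : ℝ) = if γ = γ0 then 1 else 0 := by
  have hrep := hB.2.2.1
  have hsum : ∑ γ ∈ Δ, (if γ = γ0 then (1:ℝ) else 0) • γ = γ0 := by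
    simp only [ite_smul, one_smul, zero_smul]
    rw [Finset.sum_ite_eq' Δ γ0 (fun γ => γ)]
    exact if_pos hγ0
  have key : ∑ γ ∈ Δ, ((coeff γ0 γ : ℝ) - if γ = γ0 then 1 else 0) • γ = 0 := by
    calc ∑ γ ∈ Δ, ((coeff γ0 γ : ℝ) - if γ = γ0 then 1 else 0) • γ
        = (∑ γ ∈ Δ, (coeff γ0 γ : ℝ) • γ) - ∑ γ ∈ Δ, (if γ = γ0 then (1:ℝ) else 0) • γ := by
          rw [← Finset.sum_sub_distrib]
          exact Finset.sum_congr rfl fun γ _ => (sub_smul _ _ _)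
      _ = γ0 - γ0 := by rw [← hrep γ0 (hB.1 hγ0), hsum]
      _ = 0 := sub_self _
  intro γ hγ
  have := coeff_unique' Δ hB.2.1 _ key γ hγ
  linarith

lemma root_nonzero_coeff (hB : IsBase R Δ coeff) {r : E} (hr : r ∈ R.roots)
    (h : ∀ γ ∈ Δ, coeff r γ = 0) : False := by
  have := hB.2.2.1 r hr
  rw [Finset.sum_eq_zero (fun γ hγ => by rw [h γ hγ]; simp)] at this
  exact R.ne_zero r hr this

lemma neg_mem {r : E} (hr : r ∈ R.roots) : -r ∈ R.roots := by
  have h2 : 2 * ⟪r, r⟫ / ⟪r, r⟫ = 2 := by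
    have := inner_self_ne r (R.ne_zero r hr)
    field_simp
  have := R.reflect_mem r hr r hr
  rw [h2] at this
  convert this using 1
  module

lemma eq_of_coeff_eq (hB : IsBase R Δ coeff) {r s : E} (hr : r ∈ R.roots) (hs : s ∈ R.roots)
    (h : ∀ γ ∈ Δ, (coeff r γ : ℝ) = coeff s γ) : r = s := by
  rw [hB.2.2.1 r hr, hB.2.2.1 s hs]
  exact Finset.sum_congr rfl fun γ hγ => by rw [h γ hγ]

lemma coeff_neg (hB : IsBase R Δ coeff) {r : E} (hr : r ∈ R.roots) :
    ∀ γ ∈ Δ, (coeff (-r) γ : ℝ) = -(coeff r γ) := by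
  intro γ hγ
  have := coeff_combo R Δ coeff hB hr hr (neg_mem R hr) (-1) 0 (by module) γ hγ
  rw [this]; ring

lemma not_pos_neg (hB : IsBase R Δ coeff) {r : E} (hr : r ∈ R.roots)
    (h1 : IsPos Δ coeff r) (h2 : IsPos Δ coeff (-r)) : False := by
  refine root_nonzero_coeff R Δ coeff hB hr (fun γ hγ => ?_)
  have ha := h1 γ hγ
  have hb := h2 γ hγ
  have hc := coeff_neg R Δ coeff hB hr γ hγ
  have : (coeff (-r) γ : ℝ) ≥ 0 := by exact_mod_cast hb
  have : -(coeff r γ : ℝ) ≥ 0 := hc ▸ this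
  have : (coeff r γ : ℝ) ≤ 0 := by linarith
  have : coeff r γ ≤ 0 := by exact_mod_cast this
  omega

/-- A simple reflection sends a positive root other than the simple root itself to a
positive root other than the simple root. -/
lemma simple_refl_pos (hB : IsBase R Δ coeff) {γ r : E} (hγ : γ ∈ Δ) (hr : r ∈ R.roots)
    (hpos : IsPos Δ coeff r) (hne : r ≠ γ) :
    reflMap γ r ∈ R.roots ∧ IsPos Δ coeff (reflMap γ r) ∧ reflMap γ r ≠ γ := by
  have hγR : γ ∈ R.roots := hB.1 hγ
  have hγ0 : γ ≠ 0 := R.ne_zero γ hγR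
  have hmem : reflMap γ r ∈ R.roots := R.reflect_mem γ hγR r hr
  obtain ⟨n, hn⟩ := R.pairing_int γ hγR r hr
  have hcombo : ∀ γ' ∈ Δ, (coeff (reflMap γ r) γ' : ℝ)
      = 1 * coeff r γ' + (-(n:ℝ)) * coeff γ γ' := by
    refine coeff_combo R Δ coeff hB hr hγR hmem 1 (-(n:ℝ)) ?_
    show r - pairR r γ • γ = _
    rw [show pairR r γ = (n : ℝ) from hn]
    module
  have hposnew : IsPos Δ coeff (reflMap γ r) := by
    rcases hB.2.2.2 _ hmem with h | h
    · exact h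
    · exfalso
      -- all coefficients of reflMap γ r are ≤ 0; deduce r is a multiple of γ
      have hzero : ∀ γ' ∈ Δ, γ' ≠ γ → coeff r γ' = 0 := by
        intro γ' hγ' hne'
        have h1 := hcombo γ' hγ'
        have h2 := coeff_simple R Δ coeff hB hγ γ' hγ'
        rw [if_neg hne'] at h2
        rw [h2] at h1
        have : (coeff (reflMap γ r) γ' : ℝ) = coeff r γ' := by rw [h1]; ring
        have hle := h γ' hγ'
        have hge := hpos γ' hγ'
        have : (coeff (reflMap γ r) γ' : ℤ) = coeff r γ' := by exact_mod_cast this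
        omega
      have hrγ : r = ((coeff r γ : ℝ)) • γ := by
        have hsingle := Finset.sum_eq_single_of_mem (s := Δ)
          (f := fun γ' => (coeff r γ' : ℝ) • γ') γ hγ
          (fun γ' h h' => by show (coeff r γ' : ℝ) • γ' = 0; rw [hzero γ' h h']; simp)
        nth_rewrite 1 [hB.2.2.1 r hr]
        rw [hsingle]
      rcases R.reduced γ hγR _ (hrγ ▸ hr) with hc | hc
      · exact hne (by rw [hrγ, hc, one_smul])
      · have : r = -γ := by rw [hrγ, hc]; module
        have hcn : (coeff r γ : ℝ) = -1 := by
          have e1 := coeff_neg R Δ coeff hB hγR γ hγ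
          have e2 := coeff_simple R Δ coeff hB hγ γ hγ
          rw [if_pos rfl] at e2
          rw [this, e1, e2]
        have := hpos γ hγ
        have : (0:ℝ) ≤ coeff r γ := by exact_mod_cast this
        linarith
  refine ⟨hmem, hposnew, fun habs => ?_⟩
  -- reflMap γ r = γ would give r = reflMap γ γ = -γ
  have : r = -γ := by
    have := reflMap_reflMap γ hγ0 r
    rw [habs] at this
    rw [← this]
    have : reflMap γ γ = -γ := by
      have hg := inner_self_ne γ hγ0
      simp only [reflMap, pairR]
      have : (2 * ⟪γ, γ⟫ / ⟪γ, γ⟫) = 2 := by field_simp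
      rw [this]; module
    rw [this]
  have hposγ : IsPos Δ coeff γ := by
    intro γ' hγ'
    have := coeff_simple R Δ coeff hB hγ γ' hγ'
    by_cases hc : γ' = γ
    · have : (coeff γ γ' : ℝ) = 1 := by rw [this, if_pos hc]
      have : coeff γ γ' = 1 := by exact_mod_cast this
      omega
    · have : (coeff γ γ' : ℝ) = 0 := by rw [this, if_neg hc]
      have : coeff γ γ' = 0 := by exact_mod_cast this
      omega
  exact not_pos_neg R Δ coeff hB hγR hposγ (this ▸ hpos)

end Aux


set_option maxHeartbeats 1600000 in
/-- if `α` is a short root with `(α,θ∨) ≠ 0` such that `Λα − θ` is a positive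
root, then `ht_l(α) = (ht_l(θ) + 1)/Λ`, stated as `Λ · ht_l(α) = ht_l(θ) + 1`. -/
theorem stmt4 (R : RRS E) (Δ : Finset E) (coeff : E → E → ℤ) (hB : IsBase R Δ coeff)
    (Λ : ℤ) (a : ℝ) (hΛ : Λ = 2 ∨ Λ = 3) (ha : 0 < a)
    (hlen : ∀ α ∈ R.roots, ⟪α, α⟫ = a ∨ ⟪α, α⟫ = (Λ : ℝ) * a)
    (θ : E) (hθmem : θ ∈ R.roots)
    (hθhigh : ∀ α ∈ R.roots, ∀ γ ∈ Δ, coeff α γ ≤ coeff θ γ)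
    (hθlong : ⟪θ, θ⟫ = (Λ : ℝ) * a)
    (α : E) (hα : α ∈ R.roots) (hαs : ⟪α, α⟫ = a) (hne : ⟪α, θ⟫ ≠ 0)
    (hroot : ((Λ : ℝ) • α - θ) ∈ R.roots) (hpos : IsPos Δ coeff ((Λ : ℝ) • α - θ)) :
    Λ * htP Δ coeff (fun γ => ⟪γ, γ⟫ = (Λ : ℝ) * a) α
      = htP Δ coeff (fun γ => ⟪γ, γ⟫ = (Λ : ℝ) * a) θ + 1 := by
  classical
  obtain ⟨hΔR, hLI, hrep, hsign⟩ := hB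
  have hB : IsBase R Δ coeff := ⟨hΔR, hLI, hrep, hsign⟩
  set β : E := (Λ : ℝ) • α - θ with hβdef
  have hβmem : β ∈ R.roots := hroot
  have hβpos : IsPos Δ coeff β := hpos
  have hΛ2 : (2:ℝ) ≤ (Λ:ℝ) := by rcases hΛ with h | h <;> (rw [h]; norm_num)
  have hL : (0:ℝ) < (Λ:ℝ) * a := by nlinarith
  have hLne : ((Λ:ℝ) * a) ≠ 0 := ne_of_gt hL
  have hθ0 : θ ≠ 0 := R.ne_zero θ hθmem
  have hβ0 : β ≠ 0 := R.ne_zero β hβmem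
  have hsimple1 : ∀ γ ∈ Δ, coeff γ γ = 1 := by
    intro γ hγ
    have := coeff_simple R Δ coeff hB hγ γ hγ
    rw [if_pos rfl] at this
    exact_mod_cast this
  have hθsupp : ∀ γ ∈ Δ, 1 ≤ coeff θ γ := by
    intro γ hγ
    have h1 := hθhigh γ (hΔR hγ) γ hγ
    have h2 := hsimple1 γ hγ
    omega
  have hθpos : IsPos Δ coeff θ := fun γ hγ => by have := hθsupp γ hγ; omega
  have hsimplepos : ∀ γ ∈ Δ, IsPos Δ coeff γ := by
    intro γ hγ γ' hγ'
    have := coeff_simple R Δ coeff hB hγ γ' hγ'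
    by_cases hc : γ' = γ
    · rw [if_pos hc] at this
      have h2 : coeff γ γ' = 1 := by exact_mod_cast this
      omega
    · rw [if_neg hc] at this
      have h2 : coeff γ γ' = 0 := by exact_mod_cast this
      omega
  -- the pairing of α with θ is 1, and β is long
  obtain ⟨t, ht⟩ := R.pairing_int θ hθmem α hα
  rw [hθlong] at ht
  have hαθval : ⟪α, θ⟫ = (t:ℝ) * ((Λ:ℝ)*a) / 2 := by
    field_simp at ht ⊢
    linarith
  have ht0 : t ≠ 0 := by
    intro h
    rw [h] at hαθval
    simp at hαθval
    exact hne hαθval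
  have hCS : ⟪α, θ⟫ * ⟪α, θ⟫ ≤ a * ((Λ:ℝ)*a) := by
    have := real_inner_mul_inner_self_le α θ
    rw [hαs, hθlong] at this
    exact this
  have ht2 : t = 1 ∨ t = -1 := by
    have hCS' : ((t:ℝ) * ((Λ:ℝ)*a) / 2) * ((t:ℝ) * ((Λ:ℝ)*a) / 2) ≤ a * ((Λ:ℝ)*a) := by
      rw [← hαθval]; exact hCS
    have hΛa2 : 0 < ((Λ:ℝ)*a) * ((Λ:ℝ)*a) := mul_pos hL hL
    have e1 : ((t:ℝ))^2 * (((Λ:ℝ)*a) * ((Λ:ℝ)*a)) ≤ 4 * (a * ((Λ:ℝ)*a)) := by nlinarith [hCS']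
    have e2 : 4 * (a * ((Λ:ℝ)*a)) ≤ 2 * (((Λ:ℝ)*a) * ((Λ:ℝ)*a)) := by nlinarith [hL, ha, hΛ2]
    have h1 : ((t:ℝ))^2 ≤ 2 :=
      le_of_mul_le_mul_right (by linarith) hΛa2
    have h2 : ((t^2 : ℤ) : ℝ) ≤ 2 := by push_cast; exact h1
    have h3 : t^2 ≤ 2 := by exact_mod_cast h2
    have h4 : -1 ≤ t ∧ t ≤ 1 := by constructor <;> nlinarith
    omega
  have hβlen2 : ⟪β, β⟫ = (Λ:ℝ)^2*a - (Λ:ℝ)*2*⟪α, θ⟫ + (Λ:ℝ)*a := by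
    rw [hβdef]
    simp only [inner_sub_left, inner_sub_right, real_inner_smul_left, real_inner_smul_right,
      hαs, hθlong]
    rw [real_inner_comm θ α]
    ring
  have ht1 : t = 1 := by
    rcases ht2 with h | h
    · exact h
    · exfalso
      rw [h] at hαθval
      rcases hlen β hβmem with hc | hc <;>
        rw [hβlen2, hαθval] at hc <;>
        rcases hΛ with hh | hh <;>
        rw [hh] at hc <;> push_cast at hc <;> nlinarith
  rw [ht1] at hαθval
  have hαθ : ⟪α, θ⟫ = (Λ:ℝ)*a/2 := by rw [hαθval]; push_cast; ring
  have hββ : ⟪β, β⟫ = (Λ:ℝ)*a := by rw [hβlen2, hαθ]; ring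
  have hβθ : ⟪β, θ⟫ = ((Λ:ℝ) - 2) * ((Λ:ℝ)*a) / 2 := by
    rw [hβdef]
    simp only [inner_sub_left, real_inner_smul_left, hθlong]
    linear_combination (Λ:ℝ) * hαθ
  -- the set of long positive roots
  set P : Finset E := R.roots.filter (fun r => (∀ γ ∈ Δ, 0 ≤ coeff r γ) ∧ ⟪r, r⟫ = (Λ:ℝ)*a)
    with hPdef
  have hmemP : ∀ r, r ∈ P ↔ r ∈ R.roots ∧ IsPos Δ coeff r ∧ ⟪r, r⟫ = (Λ:ℝ)*a := by
    intro r
    rw [hPdef, Finset.mem_filter]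
    exact ⟨fun ⟨h1, h2, h3⟩ => ⟨h1, h2, h3⟩, fun ⟨h1, h2, h3⟩ => ⟨h1, h2, h3⟩⟩
  have hθP : θ ∈ P := (hmemP θ).mpr ⟨hθmem, hθpos, hθlong⟩
  have hβP : β ∈ P := (hmemP β).mpr ⟨hβmem, hβpos, hββ⟩
  -- negatives of positive roots are not in P
  have hnegP : ∀ r ∈ P, ∀ s ∈ R.roots, IsPos Δ coeff s → r ≠ -s := by
    intro r hr s hs hspos habs
    rw [hmemP] at hr
    exact not_pos_neg R Δ coeff hB hs hspos (habs ▸ hr.2.1)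
  -- key involution identity
  have hA : ∀ γ ∈ Δ, ∑ r ∈ P, ⟪γ, r⟫ = if ⟪γ, γ⟫ = (Λ:ℝ)*a then (Λ:ℝ)*a else 0 := by
    intro γ hγ
    have hγR := hΔR hγ
    have hγ0 : γ ≠ 0 := R.ne_zero γ hγR
    have hstep : ∀ r ∈ P, r ≠ γ → reflMap γ r ∈ P ∧ reflMap γ r ≠ γ := by
      intro r hr hner
      rw [hmemP] at hr
      obtain ⟨hm, hp, hn⟩ := simple_refl_pos R Δ coeff hB hγ hr.1 hr.2.1 hner
      refine ⟨(hmemP _).mpr ⟨hm, hp, ?_⟩, hn⟩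
      rw [reflMap_inner γ hγ0, hr.2.2]
    by_cases hlong : ⟪γ, γ⟫ = (Λ:ℝ)*a
    · rw [if_pos hlong]
      have hγP : γ ∈ P := (hmemP γ).mpr ⟨hγR, hsimplepos γ hγ, hlong⟩
      rw [← Finset.add_sum_erase P _ hγP]
      have hz : ∑ r ∈ P.erase γ, ⟪γ, r⟫ = 0 := by
        refine Finset.sum_involution (fun r _ => reflMap γ r) ?_ ?_ ?_ ?_
        · intro r _
          rw [inner_reflMap_right γ hγ0]
          ring
        · intro r _ hfne habs
          apply hfne
          have habs' : reflMap γ r = r := habs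
          have h1 := inner_reflMap_right γ hγ0 r
          rw [habs'] at h1
          linarith
        · intro r hr
          have hr' := Finset.mem_erase.mp hr
          obtain ⟨h1, h2⟩ := hstep r hr'.2 hr'.1
          exact Finset.mem_erase.mpr ⟨h2, h1⟩
        · intro r _
          exact reflMap_reflMap γ hγ0 r
      rw [hz, hlong]
      ring
    · rw [if_neg hlong]
      refine Finset.sum_involution (fun r _ => reflMap γ r) ?_ ?_ ?_ ?_
      · intro r _
        rw [inner_reflMap_right γ hγ0]
        ring
      · intro r _ hfne habs
        apply hfne
        have habs' : reflMap γ r = r := habs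
        have h1 := inner_reflMap_right γ hγ0 r
        rw [habs'] at h1
        linarith
      · intro r hr
        have hner : r ≠ γ := by
          intro h
          rw [hmemP] at hr
          exact hlong (h ▸ hr.2.2)
        exact (hstep r hr hner).1
      · intro r _
        exact reflMap_reflMap γ hγ0 r
  -- for r in P, r ≠ θ, the pairing with θ is 0 or 1
  have hQn : ∀ r ∈ P, r ≠ θ → ⟪r, θ⟫ = 0 ∨ ⟪r, θ⟫ = (Λ:ℝ)*a/2 := by
    intro r hrP hrne
    rw [hmemP] at hrP
    obtain ⟨hrR, hrpos, hrlen⟩ := hrP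
    obtain ⟨n, hn⟩ := R.pairing_int θ hθmem r hrR
    have hn' := hn
    rw [hθlong] at hn'
    have hsmall := pair_small ((Λ:ℝ)*a) θ r hθlong hrlen hrne
      (fun habs => hnegP r ((hmemP r).mpr ⟨hrR, hrpos, hrlen⟩) θ hθmem hθpos habs) n hn
    have hrθ : ⟪r, θ⟫ = (n:ℝ) * ((Λ:ℝ)*a) / 2 := by
      field_simp at hn' ⊢
      linarith
    rcases hsmall with h | h | h
    · exfalso
      -- n = -1 : r + θ would be a root, contradicting highest-ness
      have hmem2 : r + θ ∈ R.roots := by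
        have := R.reflect_mem θ hθmem r hrR
        rw [hθlong] at this
        rw [hn', h] at this
        push_cast at this
        convert this using 1
        module
      have hco : ∀ γ ∈ Δ, (coeff (r + θ) γ : ℝ) = 1 * coeff r γ + 1 * coeff θ γ :=
        coeff_combo R Δ coeff hB hrR hθmem hmem2 1 1 (by module)
      refine root_nonzero_coeff R Δ coeff hB hrR (fun γ hγ => ?_)
      have h1 := hθhigh (r + θ) hmem2 γ hγ
      have h2 := hco γ hγ
      have h3 : coeff (r + θ) γ = coeff r γ + coeff θ γ := by exact_mod_cast (by rw [h2]; ring :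
        (coeff (r + θ) γ : ℝ) = coeff r γ + coeff θ γ)
      have h4 := hrpos γ hγ
      omega
    · left; rw [hrθ, h]; push_cast; ring
    · right; rw [hrθ, h]; push_cast; ring
  -- vanishing of most inner products with β
  have hz0 : ∀ r ∈ P, r ≠ β → ⟪r, θ⟫ = 0 → ⟪β, r⟫ = 0 := by
    intro r hrP hrne hrθ
    rw [hmemP] at hrP
    obtain ⟨hrR, hrpos, hrlen⟩ := hrP
    obtain ⟨m, hm⟩ := R.pairing_int r hrR α hα
    obtain ⟨c, hc⟩ := R.pairing_int r hrR β hβmem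
    have hm' := hm
    have hc' := hc
    rw [hrlen] at hm' hc'
    have hβr : ⟪β, r⟫ = (Λ:ℝ) * ⟪α, r⟫ := by
      rw [hβdef]
      simp only [inner_sub_left, real_inner_smul_left]
      rw [show ⟪θ, r⟫ = 0 from (real_inner_comm r θ ▸ hrθ)]
      ring
    have e1 : ⟪α, r⟫ = (m:ℝ) * ((Λ:ℝ)*a) / 2 := by
      field_simp at hm' ⊢
      linarith
    have e2 : ⟪β, r⟫ = (c:ℝ) * ((Λ:ℝ)*a) / 2 := by
      field_simp at hc' ⊢
      linarith
    have hrel0 := hβr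
    rw [e1, e2] at hrel0
    have hrel1 : (c:ℝ) * ((Λ:ℝ)*a) = ((Λ:ℝ) * (m:ℝ)) * ((Λ:ℝ)*a) := by
      linear_combination 2 * hrel0
    have hrel : (c:ℝ) = (Λ:ℝ) * (m:ℝ) := mul_right_cancel₀ hLne hrel1
    have hcΛm : c = Λ * m := by exact_mod_cast hrel
    have hsmall := pair_small ((Λ:ℝ)*a) r β hrlen hββ (fun habs => hrne habs.symm)
      (fun habs => hnegP r ((hmemP r).mpr ⟨hrR, hrpos, hrlen⟩) β hβmem hβpos (by rw [habs, neg_neg]))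
      c hc
    have hc0 : c = 0 := by rcases hΛ with h | h <;> subst h <;> omega
    rw [hc0] at e2
    rw [e2]
    norm_num
  -- main sum two ways
  have hB1 : ∑ r ∈ P, ⟪β, r⟫ = ((Λ:ℝ)*a) * ∑ γ ∈ Δ.filter (fun γ => ⟪γ, γ⟫ = (Λ:ℝ)*a),
      (coeff β γ : ℝ) := by
    have hrepβ := hrep β hβmem
    calc ∑ r ∈ P, ⟪β, r⟫
        = ∑ r ∈ P, ∑ γ ∈ Δ, (coeff β γ : ℝ) * ⟪γ, r⟫ := by
          refine Finset.sum_congr rfl fun r _ => ?_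
          conv_lhs => rw [hrepβ]
          rw [sum_inner]
          exact Finset.sum_congr rfl fun γ _ => real_inner_smul_left _ _ _
      _ = ∑ γ ∈ Δ, ∑ r ∈ P, (coeff β γ : ℝ) * ⟪γ, r⟫ := Finset.sum_comm
      _ = ∑ γ ∈ Δ, (coeff β γ : ℝ) * ∑ r ∈ P, ⟪γ, r⟫ := by
          refine Finset.sum_congr rfl fun γ _ => ?_
          rw [Finset.mul_sum]
      _ = ∑ γ ∈ Δ, (coeff β γ : ℝ) * (if ⟪γ, γ⟫ = (Λ:ℝ)*a then (Λ:ℝ)*a else 0) := by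
          refine Finset.sum_congr rfl fun γ hγ => ?_
          rw [hA γ hγ]
      _ = ∑ γ ∈ Δ, (if ⟪γ, γ⟫ = (Λ:ℝ)*a then ((Λ:ℝ)*a) * (coeff β γ : ℝ) else 0) := by
          refine Finset.sum_congr rfl fun γ _ => ?_
          by_cases h : ⟪γ, γ⟫ = (Λ:ℝ)*a
          · rw [if_pos h, if_pos h]; ring
          · rw [if_neg h, if_neg h]; ring
      _ = ∑ γ ∈ Δ.filter (fun γ => ⟪γ, γ⟫ = (Λ:ℝ)*a), ((Λ:ℝ)*a) * (coeff β γ : ℝ) :=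
          (Finset.sum_filter _ _).symm
      _ = ((Λ:ℝ)*a) * ∑ γ ∈ Δ.filter (fun γ => ⟪γ, γ⟫ = (Λ:ℝ)*a), (coeff β γ : ℝ) :=
          (Finset.mul_sum _ _ _).symm
  have hflip : ∀ r, r ∈ P → r ≠ θ → ⟪r, θ⟫ = (Λ:ℝ)*a/2 →
      ((θ - r) ∈ P ∧ (θ - r) ≠ θ ∧ ⟪θ - r, θ⟫ = (Λ:ℝ)*a/2 ∧ θ - r ≠ r) := by
    intro r hrP hrne hrθ
    rw [hmemP] at hrP
    obtain ⟨hrR, hrpos, hrlen⟩ := hrP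
    have hsubmem : r - θ ∈ R.roots := by
      have h0 := R.reflect_mem θ hθmem r hrR
      have hcoef : 2 * ⟪r, θ⟫ / ⟪θ, θ⟫ = 1 := by rw [hθlong, hrθ]; field_simp
      rw [hcoef, one_smul] at h0
      exact h0
    have hθr : θ - r ∈ R.roots := by
      have := neg_mem R hsubmem
      rwa [neg_sub] at this
    have hposθr : IsPos Δ coeff (θ - r) := by
      intro γ hγ
      have h1 := coeff_combo R Δ coeff hB hθmem hrR hθr 1 (-1) (by module) γ hγ
      have h2 : (coeff (θ - r) γ : ℝ) = (coeff θ γ : ℝ) - coeff r γ := by rw [h1]; ring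
      have h3 : coeff (θ - r) γ = coeff θ γ - coeff r γ := by exact_mod_cast h2
      have h4 := hθhigh r hrR γ hγ
      omega
    have hlenθr : ⟪θ - r, θ - r⟫ = (Λ:ℝ)*a := by
      simp only [inner_sub_left, inner_sub_right, hθlong, hrlen]
      linarith [real_inner_comm r θ, real_inner_comm θ r, hrθ]
    have hθrθ : ⟪θ - r, θ⟫ = (Λ:ℝ)*a/2 := by
      rw [inner_sub_left, hθlong, hrθ]
      ring
    refine ⟨(hmemP _).mpr ⟨hθr, hposθr, hlenθr⟩, ?_, hθrθ, ?_⟩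
    · intro h
      exact R.ne_zero r hrR (sub_eq_self.mp h)
    · intro h
      have h2r : (2:ℝ) • r ∈ R.roots := by
        have : (2:ℝ) • r = θ := by
          have := sub_eq_iff_eq_add.mp h
          rw [this]
          module
        rw [this]
        exact hθmem
      rcases R.reduced r hrR 2 h2r with hc | hc <;> norm_num at hc
  have hβneθ : β ≠ θ := by
    intro h
    have h1 : ⟪β, θ⟫ = (Λ:ℝ)*a := by rw [h, hθlong]
    rw [hβθ] at h1
    rcases hΛ with hv | hv <;> rw [hv] at h1 <;> push_cast at h1 <;> nlinarith
  have hq1 : Λ = 3 → ∀ r ∈ P, r ≠ θ → r ≠ β → ⟪r, θ⟫ = (Λ:ℝ)*a/2 →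
      ⟪β, r⟫ = -(((Λ:ℝ)*a)/2) := by
    intro hΛ3 r hrP hrne hrneβ hrθ
    have hrP' := hrP
    rw [hmemP] at hrP'
    obtain ⟨hrR, hrpos, hrlen⟩ := hrP'
    obtain ⟨m, hm⟩ := R.pairing_int r hrR α hα
    obtain ⟨c, hc⟩ := R.pairing_int r hrR β hβmem
    have hm' := hm
    have hc' := hc
    rw [hrlen] at hm' hc'
    have hβr : ⟪β, r⟫ = (Λ:ℝ) * ⟪α, r⟫ - ⟪θ, r⟫ := by
      rw [hβdef]
      simp only [inner_sub_left, real_inner_smul_left]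
    have hθrval : ⟪θ, r⟫ = (Λ:ℝ)*a/2 := by
      linarith [hrθ, real_inner_comm r θ, real_inner_comm θ r]
    have e1 : ⟪α, r⟫ = (m:ℝ) * ((Λ:ℝ)*a) / 2 := by
      field_simp at hm' ⊢
      linarith
    have e2 : ⟪β, r⟫ = (c:ℝ) * ((Λ:ℝ)*a) / 2 := by
      field_simp at hc' ⊢
      linarith
    rw [e1, e2, hθrval] at hβr
    have hrel1 : (c:ℝ) * ((Λ:ℝ)*a) = ((Λ:ℝ) * (m:ℝ) - 1) * ((Λ:ℝ)*a) := by
      linear_combination 2 * hβr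
    have hrel : (c:ℝ) = (Λ:ℝ) * (m:ℝ) - 1 := mul_right_cancel₀ hLne hrel1
    have hcΛm : c = Λ * m - 1 := by exact_mod_cast hrel
    have hsmall := pair_small ((Λ:ℝ)*a) r β hrlen hββ (fun habs => hrneβ habs.symm)
      (fun habs => hnegP r hrP β hβmem hβpos (by rw [habs, neg_neg]))
      c hc
    have hc0 : c = -1 := by subst hΛ3; omega
    rw [hc0] at e2
    rw [e2]
    push_cast
    ring
  have hq2 : Λ = 3 → ∀ r ∈ P, r ≠ θ → r ≠ β → r ≠ θ - β → ⟪r, θ⟫ = (Λ:ℝ)*a/2 → False := by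
    intro hΛ3 r hrP hrne hrneβ hrneθβ hrθ
    have hβrval := hq1 hΛ3 r hrP hrne hrneβ hrθ
    obtain ⟨hr'P, hr'neθ, hr'θ, _⟩ := hflip r hrP hrne hrθ
    have hr'P' := hr'P
    rw [hmemP] at hr'P'
    obtain ⟨hr'R, hr'pos, hr'len⟩ := hr'P'
    obtain ⟨c', hcp⟩ := R.pairing_int (θ - r) hr'R β hβmem
    have hβr' : ⟪β, θ - r⟫ = ((Λ:ℝ) - 1) * ((Λ:ℝ)*a) / 2 := by
      rw [inner_sub_right, hβθ, hβrval]
      ring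
    have hcp' := hcp
    rw [hr'len] at hcp'
    have e2' : ⟪β, θ - r⟫ = (c':ℝ) * ((Λ:ℝ)*a) / 2 := by
      field_simp at hcp' ⊢
      linarith
    have hrel1 : (c':ℝ) * ((Λ:ℝ)*a) = ((Λ:ℝ) - 1) * ((Λ:ℝ)*a) := by
      rw [e2'] at hβr'
      linear_combination 2 * hβr'
    have hrel : (c':ℝ) = (Λ:ℝ) - 1 := mul_right_cancel₀ hLne hrel1
    have hc'v : c' = Λ - 1 := by exact_mod_cast hrel
    have hr'neβ : θ - r ≠ β := by
      intro h
      apply hrneθβ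
      rw [← h]
      module
    have hsmall := pair_small ((Λ:ℝ)*a) (θ - r) β hr'len hββ (fun habs => hr'neβ habs.symm)
      (fun habs => hnegP (θ - r) hr'P β hβmem hβpos (by rw [habs, neg_neg]))
      c' hcp
    subst hΛ3
    omega
  have hB2 : ∑ r ∈ P, ⟪β, r⟫ = (Λ:ℝ)*a := by
    rw [← Finset.add_sum_erase P (fun r => ⟪β, r⟫) hθP]
    rw [← Finset.sum_filter_add_sum_filter_not (P.erase θ) (fun r => ⟪r, θ⟫ = 0)
      (fun r => ⟪β, r⟫)]
    have hQ0mem : ∀ r, r ∈ (P.erase θ).filter (fun r => ⟪r, θ⟫ = 0) →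
        r ∈ P ∧ r ≠ θ ∧ ⟪r, θ⟫ = 0 := by
      intro r hr
      have h1 := Finset.mem_filter.mp hr
      have h2 := Finset.mem_erase.mp h1.1
      exact ⟨h2.2, h2.1, h1.2⟩
    have hQ1mem : ∀ r, r ∈ (P.erase θ).filter (fun r => ¬⟪r, θ⟫ = 0) →
        r ∈ P ∧ r ≠ θ ∧ ⟪r, θ⟫ = (Λ:ℝ)*a/2 := by
      intro r hr
      have h1 := Finset.mem_filter.mp hr
      have h2 := Finset.mem_erase.mp h1.1
      rcases hQn r h2.2 h2.1 with h | h
      · exact absurd h h1.2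
      · exact ⟨h2.2, h2.1, h⟩
    rcases hΛ with hΛv | hΛv
    · -- Λ = 2
      have hΛr : (Λ:ℝ) = 2 := by rw [hΛv]; norm_num
      have hβθ0 : ⟪β, θ⟫ = 0 := by rw [hβθ, hΛr]; ring
      have hQ0sum : ∑ r ∈ (P.erase θ).filter (fun r => ⟪r, θ⟫ = 0), ⟪β, r⟫ = (Λ:ℝ)*a := by
        have hβmem0 : β ∈ (P.erase θ).filter (fun r => ⟪r, θ⟫ = 0) :=
          Finset.mem_filter.mpr ⟨Finset.mem_erase.mpr ⟨hβneθ, hβP⟩, hβθ0⟩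
        rw [Finset.sum_eq_single_of_mem β hβmem0
          (fun r hr hrne => hz0 r (hQ0mem r hr).1 hrne (hQ0mem r hr).2.2)]
        exact hββ
      have hQ1sum : ∑ r ∈ (P.erase θ).filter (fun r => ¬⟪r, θ⟫ = 0), ⟪β, r⟫ = 0 := by
        refine Finset.sum_involution (fun r _ => θ - r) ?_ ?_ ?_ ?_
        · intro r hr
          show ⟪β, r⟫ + ⟪β, θ - r⟫ = 0
          rw [inner_sub_right]
          rw [hβθ0]
          ring
        · intro r hr _
          obtain ⟨hrP, hrne, hrθ⟩ := hQ1mem r hr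
          exact (hflip r hrP hrne hrθ).2.2.2
        · intro r hr
          obtain ⟨hrP, hrne, hrθ⟩ := hQ1mem r hr
          obtain ⟨h1, h2, h3, _⟩ := hflip r hrP hrne hrθ
          refine Finset.mem_filter.mpr ⟨Finset.mem_erase.mpr ⟨h2, h1⟩, ?_⟩
          intro h0
          rw [h0] at h3
          exact hLne (by linarith)
        · intro r hr
          show θ - (θ - r) = r
          module
      rw [hQ0sum, hQ1sum, hβθ0]
      ring
    · -- Λ = 3
      have hΛr : (Λ:ℝ) = 3 := by rw [hΛv]; norm_num
      have hβθval : ⟪β, θ⟫ = (Λ:ℝ)*a/2 := by rw [hβθ, hΛr]; ring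
      have hβθne0 : ⟪β, θ⟫ ≠ 0 := by
        rw [hβθval]
        intro h0
        exact hLne (by linarith)
      have hβQ1 : β ∈ (P.erase θ).filter (fun r => ¬⟪r, θ⟫ = 0) :=
        Finset.mem_filter.mpr ⟨Finset.mem_erase.mpr ⟨hβneθ, hβP⟩, hβθne0⟩
      obtain ⟨hθβP, hθβneθ, hθβθ, hθβner⟩ := hflip β hβP hβneθ hβθval
      have hθβQ1 : θ - β ∈ (P.erase θ).filter (fun r => ¬⟪r, θ⟫ = 0) := by
        refine Finset.mem_filter.mpr ⟨Finset.mem_erase.mpr ⟨hθβneθ, hθβP⟩, ?_⟩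
        intro h0
        rw [h0] at hθβθ
        exact hLne (by linarith)
      have hQ0sum : ∑ r ∈ (P.erase θ).filter (fun r => ⟪r, θ⟫ = 0), ⟪β, r⟫ = 0 := by
        refine Finset.sum_eq_zero fun r hr => ?_
        obtain ⟨hrP, hrne, hrθ⟩ := hQ0mem r hr
        refine hz0 r hrP ?_ hrθ
        intro h
        rw [h] at hrθ
        exact hβθne0 hrθ
      have hQ1eq : (P.erase θ).filter (fun r => ¬⟪r, θ⟫ = 0) = {β, θ - β} := by
        apply Finset.Subset.antisymm
        · intro r hr
          obtain ⟨hrP, hrne, hrθ⟩ := hQ1mem r hr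
          simp only [Finset.mem_insert, Finset.mem_singleton]
          by_contra hcon
          push_neg at hcon
          exact hq2 hΛv r hrP hrne hcon.1 hcon.2 hrθ
        · intro r hr
          rcases Finset.mem_insert.mp hr with h | h
          · subst h; exact hβQ1
          · rw [Finset.mem_singleton] at h
            subst h
            exact hθβQ1
      have hβneθβ : β ≠ θ - β := fun h => hθβner (by rw [← h])
      rw [hQ1eq, Finset.sum_pair hβneθβ, hQ0sum]
      have hsub : ⟪β, θ - β⟫ = ⟪β, θ⟫ - ⟪β, β⟫ := inner_sub_right β θ β
      linarith [hββ, hβθval, hsub]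
  -- conclusion
  have hkey : ∑ γ ∈ Δ.filter (fun γ => ⟪γ, γ⟫ = (Λ:ℝ)*a), (coeff β γ : ℝ) = 1 := by
    have h1 : ((Λ:ℝ)*a) * (∑ γ ∈ Δ.filter (fun γ => ⟪γ, γ⟫ = (Λ:ℝ)*a), (coeff β γ : ℝ))
        = ((Λ:ℝ)*a) * 1 := by rw [mul_one, ← hB1, hB2]
    exact mul_left_cancel₀ hLne h1
  have hcβ : ∀ γ ∈ Δ, (coeff β γ : ℝ) = (Λ:ℝ) * coeff α γ + (-1) * coeff θ γ :=
    coeff_combo R Δ coeff hB hα hθmem hβmem (Λ:ℝ) (-1) (by rw [hβdef]; module)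
  have hfinal : (Λ:ℝ) * (∑ γ ∈ Δ.filter (fun γ => ⟪γ, γ⟫ = (Λ:ℝ)*a), (coeff α γ : ℝ))
      = (∑ γ ∈ Δ.filter (fun γ => ⟪γ, γ⟫ = (Λ:ℝ)*a), (coeff θ γ : ℝ)) + 1 := by
    rw [← hkey, Finset.mul_sum, ← Finset.sum_add_distrib]
    refine Finset.sum_congr rfl fun γ hγ => ?_
    have hγΔ := (Finset.mem_filter.mp hγ).1
    have := hcβ γ hγΔ
    linarith
  have : ((Λ * htP Δ coeff (fun γ => ⟪γ, γ⟫ = (Λ:ℝ)*a) α : ℤ) : ℝ)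
      = ((htP Δ coeff (fun γ => ⟪γ, γ⟫ = (Λ:ℝ)*a) θ + 1 : ℤ) : ℝ) := by
    unfold htP
    push_cast
    convert hfinal using 2
  exact_mod_cast this

end
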